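/- Let q and p be probability mass functions on ℕ with positive tail probabilities. Then for any k ∈ ℕ, the KL divergence between the conditional distributions given T ≥ k satisfies the recursion: D_KL(q(·|T ≥ k) ‖ p(·|T ≥ k)) = f(q,p,k) + q(T ≠ k | T ≥ k) · D_KL(q(·|T ≥ k+1) ‖ p(·|T ≥ k+1)), where f(q,p,k) = q(T=k|T≥k) log[ q(T=k|T≥k)/p(T=k|T≥k) ] + q(T≠k|T≥k) log[ q(T≠k|T≥k)/p(T≠k|T≥k) ]. -/

import Mathlib

/-- one-step recursion for the KL divergence between the conditional
distributions of `q` and `p` given `T ≥ k`. -/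
theorem conditional_kl_recursion
    (q p tq tp : ℕ → ℝ)
    (hq0 : ∀ t, 0 < q t) (hp0 : ∀ t, 0 < p t)
    (hqsum : ∑' t, q t = 1) (hpsum : ∑' t, p t = 1)
    (htq : ∀ t, tq t = ∑' i, q (t + i)) (htp : ∀ t, tp t = ∑' i, p (t + i))
    (htqpos : ∀ t, 0 < tq t) (htppos : ∀ t, 0 < tp t)
    (D : ℕ → ℝ)
    (hD : ∀ k, D k = ∑' t, (q (k + t) / tq k) *
        Real.log ((q (k + t) / tq k) / (p (k + t) / tp k)))
    (hDsum : ∀ k, Summable (fun t => (q (k + t) / tq k) *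
        Real.log ((q (k + t) / tq k) / (p (k + t) / tp k))))
    (k : ℕ) :
    D k
      = ((q k / tq k) * Real.log ((q k / tq k) / (p k / tp k)) +
         (1 - q k / tq k) * Real.log ((1 - q k / tq k) / (1 - p k / tp k)))
        + (1 - q k / tq k) * D (k + 1) := by
  have hsq : ∀ m, Summable (fun t => q (m + t)) := by
    intro m
    by_contra h
    have h0 := tsum_eq_zero_of_not_summable h
    have hh := htqpos m
    rw [htq m, h0] at hh
    exact lt_irrefl 0 hh
  have hsp : ∀ m, Summable (fun t => p (m + t)) := by
    intro m
    by_contra h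
    have h0 := tsum_eq_zero_of_not_summable h
    have hh := htppos m
    rw [htp m, h0] at hh
    exact lt_irrefl 0 hh
  have hqk := htqpos k
  have hqk1 := htqpos (k + 1)
  have hpk := htppos k
  have hpk1 := htppos (k + 1)
  have hqsplit : tq k = q k + tq (k + 1) := by
    rw [htq k, htq (k + 1), Summable.tsum_eq_zero_add (hsq k)]
    congr 1
    exact tsum_congr fun n => congrArg q (by omega)
  have hpsplit : tp k = p k + tp (k + 1) := by
    rw [htp k, htp (k + 1), Summable.tsum_eq_zero_add (hsp k)]
    congr 1
    exact tsum_congr fun n => congrArg p (by omega)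
  set rq := tq (k + 1) / tq k with hrq
  set rp := tp (k + 1) / tp k with hrp
  have hrqpos : 0 < rq := div_pos hqk1 hqk
  have hrppos : 0 < rp := div_pos hpk1 hpk
  have hrq1 : 1 - q k / tq k = rq := by
    rw [hrq]
    field_simp
    linarith [hqsplit]
  have hrp1 : 1 - p k / tp k = rp := by
    rw [hrp]
    field_simp
    linarith [hpsplit]
  -- pointwise identity for tail terms
  have hterm : ∀ t : ℕ,
      (q (k + (t + 1)) / tq k) * Real.log ((q (k + (t + 1)) / tq k) / (p (k + (t + 1)) / tp k))
        = rq * ((q ((k + 1) + t) / tq (k + 1)) *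
            Real.log ((q ((k + 1) + t) / tq (k + 1)) / (p ((k + 1) + t) / tp (k + 1))))
          + (rq * Real.log (rq / rp)) * (q ((k + 1) + t) / tq (k + 1)) := by
    intro t
    have hidx : k + (t + 1) = (k + 1) + t := by omega
    rw [hidx]
    set a := q ((k + 1) + t) with ha
    set b := p ((k + 1) + t) with hb
    have hapos : 0 < a := hq0 _
    have hbpos : 0 < b := hp0 _
    have hratio : (a / tq k) / (b / tp k)
        = ((a / tq (k + 1)) / (b / tp (k + 1))) * (rq / rp) := by
      rw [hrq, hrp]
      field_simp
    have h1 : 0 < (a / tq (k + 1)) / (b / tp (k + 1)) :=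
      div_pos (div_pos hapos hqk1) (div_pos hbpos hpk1)
    have h2 : 0 < rq / rp := div_pos hrqpos hrppos
    rw [hratio, Real.log_mul (ne_of_gt h1) (ne_of_gt h2)]
    have haq : a / tq k = rq * (a / tq (k + 1)) := by
      rw [hrq]; field_simp
    rw [haq]; ring
  -- sum of tail probabilities is 1
  have hsum1 : ∑' t, q ((k + 1) + t) / tq (k + 1) = 1 := by
    rw [tsum_div_const, ← htq (k + 1), div_self (ne_of_gt hqk1)]
  have hsummand1 : Summable (fun t => rq * ((q ((k + 1) + t) / tq (k + 1)) *
      Real.log ((q ((k + 1) + t) / tq (k + 1)) / (p ((k + 1) + t) / tp (k + 1))))) :=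
    (hDsum (k + 1)).mul_left rq
  have hsummand2 : Summable (fun t => (rq * Real.log (rq / rp)) * (q ((k + 1) + t) / tq (k + 1))) :=
    (((hsq (k + 1)).div_const (tq (k + 1))).mul_left _)
  have htail : ∑' t, (q (k + (t + 1)) / tq k) *
      Real.log ((q (k + (t + 1)) / tq k) / (p (k + (t + 1)) / tp k))
      = rq * D (k + 1) + rq * Real.log (rq / rp) := by
    calc ∑' t, (q (k + (t + 1)) / tq k) *
        Real.log ((q (k + (t + 1)) / tq k) / (p (k + (t + 1)) / tp k))
        = ∑' t, (rq * ((q ((k + 1) + t) / tq (k + 1)) *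
            Real.log ((q ((k + 1) + t) / tq (k + 1)) / (p ((k + 1) + t) / tp (k + 1))))
          + (rq * Real.log (rq / rp)) * (q ((k + 1) + t) / tq (k + 1))) :=
          tsum_congr hterm
      _ = rq * D (k + 1) + rq * Real.log (rq / rp) := by
          rw [Summable.tsum_add hsummand1 hsummand2, tsum_mul_left, tsum_mul_left, hsum1,
            ← hD (k + 1)]
          ring
  have hD0 : D k = (q k / tq k) * Real.log ((q k / tq k) / (p k / tp k))
      + (rq * D (k + 1) + rq * Real.log (rq / rp)) := by
    rw [hD k, Summable.tsum_eq_zero_add (hDsum k)]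
    simp only [Nat.add_zero]
    rw [htail]
  rw [hD0, hrq1, hrp1]
  ring
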